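/- Let f : (X, ρ_X) → (Y, ρ_Y) be a continuous map of compact metric spaces and μ, ν ∈ I(X) with an optimal admissible measure λ_{μν} realizing ρ_{X,I}(μ, ν). Then ρ_{Y,I}(I(f)(μ), I(f)(ν)) ≤ sup{ ρ_Y(f(x), f(y)) : (x, y) ∈ supp λ_{μν} }. Consequently, if f is (ε, δ)-uniformly continuous, then I(f) : (I(X), ρ_{X,I}) → (I(Y), ρ_{Y,I}) is (ε, δ)-uniformly continuous. -/

import Mathlib

/-- An idempotent probability measure on `X`: a functional on `C(X, ℝ)` preserving constants,
shifting under addition of constants, and turning pointwise max into max. -/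
def IsIPM (X : Type*) [TopologicalSpace X] (μ : C(X, ℝ) → ℝ) : Prop :=
  (∀ c : ℝ, μ (ContinuousMap.const X c) = c) ∧
  (∀ (φ : C(X, ℝ)) (c : ℝ), μ (φ + ContinuousMap.const X c) = μ φ + c) ∧
  (∀ φ ψ : C(X, ℝ), μ (φ ⊔ ψ) = max (μ φ) (μ ψ))


/-- Pushforward of a functional along a continuous map: `I(f)(μ)(φ) = μ(φ ∘ f)`. -/
def IPMmap {X Y : Type*} [TopologicalSpace X] [TopologicalSpace Y]
    (f : C(X, Y)) (μ : C(X, ℝ) → ℝ) : C(Y, ℝ) → ℝ :=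
  fun φ => μ (φ.comp f)


/-- The support of `μ`: intersection of all closed `A ⊆ X` such that `μ` comes from an
idempotent probability measure on `A`. -/
def IPMsupp {X : Type*} [TopologicalSpace X] (μ : C(X, ℝ) → ℝ) : Set X :=
  ⋂₀ {A : Set X | IsClosed A ∧ ∃ ν : C(A, ℝ) → ℝ, IsIPM A ν ∧
      ∀ φ : C(X, ℝ), μ φ = ν (φ.restrict A)}

/-- The set `Λ(μ₁, μ₂)` of admissible measures on `X × X` with marginals `μ₁`, `μ₂`. -/
def AdmSet {X : Type*} [TopologicalSpace X] (μ₁ μ₂ : C(X, ℝ) → ℝ) :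
    Set (C(X × X, ℝ) → ℝ) :=
  {ξ | IsIPM (X × X) ξ ∧ IPMmap ContinuousMap.fst ξ = μ₁ ∧ IPMmap ContinuousMap.snd ξ = μ₂}

/-- `ρ_I(μ₁, μ₂) = inf { sup { d(x,y) : (x,y) ∈ supp ξ } : ξ ∈ Λ(μ₁, μ₂) }`,
with respect to a distance function `d` on `X`. -/
noncomputable def rhoID {X : Type*} [TopologicalSpace X] (d : X → X → ℝ)
    (μ₁ μ₂ : C(X, ℝ) → ℝ) : ℝ :=
  sInf ((fun ξ => sSup ((fun p : X × X => d p.1 p.2) '' IPMsupp ξ)) '' AdmSet μ₁ μ₂)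
namespace IPMAux

variable {X : Type*} [TopologicalSpace X] {μ : C(X, ℝ) → ℝ}



lemma mono (hμ : IsIPM X μ) {φ ψ : C(X, ℝ)} (h : ∀ x, φ x ≤ ψ x) : μ φ ≤ μ ψ := by
  have hsup : φ ⊔ ψ = ψ := by ext x; exact sup_eq_right.mpr (h x)
  have := hμ.2.2 φ ψ
  rw [hsup] at this
  rw [this]; exact le_max_left _ _

lemma nonemptyX (hμ : IsIPM X μ) : Nonempty X := by
  by_contra h
  have : (ContinuousMap.const X (0:ℝ)) = ContinuousMap.const X 1 := by
    ext x; exact absurd ⟨x⟩ h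
  have h0 := hμ.1 0
  rw [this, hμ.1 1] at h0
  norm_num at h0

lemma sup'_eval (hμ : IsIPM X μ) {ι : Type*} (s : Finset ι) (hs : s.Nonempty)
    (g : ι → C(X, ℝ)) : μ (s.sup' hs g) = s.sup' hs fun i => μ (g i) := by
  induction hs using Finset.Nonempty.cons_induction with
  | singleton i => simp
  | cons i s hi hs ih => rw [Finset.sup'_cons, Finset.sup'_cons, hμ.2.2, ih]; exact hs

lemma rep (hμ : IsIPM X μ) [CompactSpace X] (φ : C(X, ℝ)) {ε : ℝ} (hε : 0 < ε) :
    ∃ x : X, ∀ ψ : C(X, ℝ), μ φ ≤ μ ψ + (φ x - ψ x) + ε := by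
  by_contra h
  push_neg at h
  choose ψ hψ using h
  have hX : Nonempty X := nonemptyX hμ
  set g : X → C(X, ℝ) := fun x => ψ x + ContinuousMap.const X (φ x - ψ x x + ε) with hg
  have hgval : ∀ x, μ (g x) < μ φ := by
    intro x
    rw [hg]
    simp only []
    rw [hμ.2.1]
    linarith [hψ x]
  have hgx : ∀ x, φ x < g x x := by
    intro x; simp [hg]; linarith
  set U : X → Set X := fun x => {y | φ y < g x y} with hU
  have hUopen : ∀ x, IsOpen (U x) :=
    fun x => isOpen_lt φ.continuous (g x).continuous
  have hcover : Set.univ ⊆ ⋃ x, U x := by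
    intro y _; exact Set.mem_iUnion.2 ⟨y, hgx y⟩
  obtain ⟨t, ht⟩ := isCompact_univ.elim_finite_subcover U hUopen hcover
  have htne : t.Nonempty := by
    rcases hX with ⟨x⟩
    rcases Set.mem_iUnion.1 (ht (Set.mem_univ x)) with ⟨i, hi⟩
    simp only [Set.mem_iUnion] at hi
    exact ⟨i, hi.1⟩
  have hle : ∀ y, φ y ≤ (t.sup' htne g) y := by
    intro y
    rcases Set.mem_iUnion.1 (ht (Set.mem_univ y)) with ⟨i, hi⟩
    simp only [Set.mem_iUnion] at hi
    calc φ y ≤ g i y := le_of_lt hi.2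
    _ ≤ _ := by
        rw [ContinuousMap.sup'_apply]
        exact Finset.le_sup' (fun j => g j y) hi.1
  have : μ φ ≤ μ (t.sup' htne g) := mono hμ hle
  rw [sup'_eval hμ] at this
  rcases Finset.exists_mem_eq_sup' htne (fun i => μ (g i)) with ⟨i, hit, hieq⟩
  rw [hieq] at this
  exact absurd this (not_le.2 (hgval i))


/-- points with locally bounded density -/
def Nset (μ : C(X, ℝ) → ℝ) : Set X :=
  {x | ∃ M : ℝ, ∀ ψ : C(X, ℝ), ψ x = 0 → M ≤ μ ψ}

lemma rep_mem (hμ : IsIPM X μ) [CompactSpace X] (φ : C(X, ℝ)) {ε : ℝ} (hε : 0 < ε) :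
    ∃ x ∈ Nset μ, ∀ ψ : C(X, ℝ), μ φ ≤ μ ψ + (φ x - ψ x) + ε := by
  obtain ⟨x, hx⟩ := rep hμ φ hε
  refine ⟨x, ⟨μ φ - φ x - ε, fun ψ hψ => ?_⟩, hx⟩
  have := hx ψ
  rw [hψ] at this
  linarith

lemma Nset_subset_supp [T1Space X] [NormalSpace X] (hμ : IsIPM X μ) :
    Nset μ ⊆ IPMsupp μ := by
  intro x hx
  intro A hA
  obtain ⟨hAc, ν, hν, hrep⟩ := hA
  by_contra hxA
  obtain ⟨M, hM⟩ := hx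
  obtain ⟨u, hu0, hu1, _⟩ := exists_continuous_zero_one_of_isClosed hAc
    (isClosed_singleton (x := x)) (Set.disjoint_singleton_right.2 hxA)
  set K : ℝ := 1 - M
  set ψ : C(X, ℝ) := K • u + ContinuousMap.const X (-K) with hψdef
  have hψx : ψ x = 0 := by
    simp [hψdef, hu1 (Set.mem_singleton x)]
  have hres : ψ.restrict A = ContinuousMap.const A (-K) := by
    ext a
    simp [hψdef, hu0 a.2]
  have : μ ψ = -K := by rw [hrep, hres, hν.1]
  have h2 := hM ψ hψx
  rw [this] at h2
  simp only [K] at h2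
  linarith

lemma eqOn_supp [CompactSpace X] [T1Space X] [NormalSpace X] (hμ : IsIPM X μ)
    {φ ψ : C(X, ℝ)} (h : Set.EqOn φ ψ (IPMsupp μ)) : μ φ = μ ψ := by
  have key : ∀ φ' ψ' : C(X, ℝ), Set.EqOn φ' ψ' (IPMsupp μ) → μ φ' ≤ μ ψ' := by
    intro φ' ψ' h'
    refine le_of_forall_pos_le_add fun ε hε => ?_
    obtain ⟨x, hxN, hx⟩ := rep_mem hμ φ' hε
    have hxs : x ∈ IPMsupp μ := Nset_subset_supp hμ hxN
    have := hx ψ'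
    rw [h' hxs] at this
    linarith
  exact le_antisymm (key _ _ h) (key _ _ fun x hx => (h hx).symm)

lemma supp_nonempty [CompactSpace X] (hμ : IsIPM X μ)
    [T1Space X] [NormalSpace X] : (IPMsupp μ).Nonempty := by
  obtain ⟨x, hxN, _⟩ := rep_mem hμ 0 one_pos
  exact ⟨x, Nset_subset_supp hμ hxN⟩

lemma supp_closed (μ : C(X, ℝ) → ℝ) : IsClosed (IPMsupp μ) :=
  isClosed_sInter fun _ hA => hA.1

/-- the support is itself a supporting set -/
lemma supp_supporting [CompactSpace X] [T1Space X] [NormalSpace X] (hμ : IsIPM X μ) :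
    ∃ σ : C(IPMsupp μ, ℝ) → ℝ, IsIPM (IPMsupp μ) σ ∧
      ∀ φ : C(X, ℝ), μ φ = σ (φ.restrict (IPMsupp μ)) := by
  have hTz : ∀ g : C(IPMsupp μ, ℝ), ∃ h : C(X, ℝ), h.restrict (IPMsupp μ) = g :=
    fun g => g.exists_restrict_eq (supp_closed μ)
  choose E hE using hTz
  refine ⟨fun g => μ (E g), ⟨?_, ?_, ?_⟩, ?_⟩
  · intro c
    show μ (E (ContinuousMap.const _ c)) = c
    have : Set.EqOn (⇑(E (ContinuousMap.const _ c))) (⇑(ContinuousMap.const X c)) (IPMsupp μ) := by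
      intro x hx
      have := ContinuousMap.congr_fun (hE (ContinuousMap.const _ c)) ⟨x, hx⟩
      simpa using this
    rw [eqOn_supp hμ this, hμ.1]
  · intro g c
    show μ (E (g + ContinuousMap.const _ c)) = μ (E g) + c
    have : Set.EqOn (⇑(E (g + ContinuousMap.const _ c)))
        (⇑(E g + ContinuousMap.const X c)) (IPMsupp μ) := by
      intro x hx
      have h1 := ContinuousMap.congr_fun (hE (g + ContinuousMap.const _ c)) ⟨x, hx⟩
      have h2 := ContinuousMap.congr_fun (hE g) ⟨x, hx⟩
      simp only [ContinuousMap.restrict_apply] at h1 h2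
      simp [h1, h2]
    rw [eqOn_supp hμ this, hμ.2.1]
  · intro g h
    show μ (E (g ⊔ h)) = max (μ (E g)) (μ (E h))
    have : Set.EqOn (⇑(E (g ⊔ h))) (⇑(E g ⊔ E h)) (IPMsupp μ) := by
      intro x hx
      have h1 := ContinuousMap.congr_fun (hE (g ⊔ h)) ⟨x, hx⟩
      have h2 := ContinuousMap.congr_fun (hE g) ⟨x, hx⟩
      have h3 := ContinuousMap.congr_fun (hE h) ⟨x, hx⟩
      simp only [ContinuousMap.restrict_apply] at h1 h2 h3
      simp [h1, h2, h3]
    rw [eqOn_supp hμ this, hμ.2.2]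
  · intro φ
    show μ φ = μ (E (φ.restrict (IPMsupp μ)))
    have : Set.EqOn (⇑φ) (⇑(E (φ.restrict (IPMsupp μ)))) (IPMsupp μ) := by
      intro x hx
      have h1 := ContinuousMap.congr_fun (hE (φ.restrict (IPMsupp μ))) ⟨x, hx⟩
      simpa using h1.symm
    exact eqOn_supp hμ this


variable {Y : Type*} [TopologicalSpace Y]

lemma isIPM_map (g : C(X, Y)) (hμ : IsIPM X μ) : IsIPM Y (IPMmap g μ) := by
  refine ⟨fun c => ?_, fun φ c => ?_, fun φ ψ => ?_⟩
  · have : (ContinuousMap.const Y c).comp g = ContinuousMap.const X c := by ext x; rfl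
    simp [IPMmap, this, hμ.1]
  · have : (φ + ContinuousMap.const Y c).comp g
        = φ.comp g + ContinuousMap.const X c := by ext x; rfl
    simp [IPMmap, this, hμ.2.1]
  · have : (φ ⊔ ψ).comp g = φ.comp g ⊔ ψ.comp g := by ext x; rfl
    simp [IPMmap, this, hμ.2.2]

lemma supp_map_subset {X Y : Type*} [MetricSpace X] [CompactSpace X]
    [TopologicalSpace Y] [T2Space Y] {μ : C(X, ℝ) → ℝ}
    (g : C(X, Y)) (hμ : IsIPM X μ) :
    IPMsupp (IPMmap g μ) ⊆ g '' IPMsupp μ := by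
  obtain ⟨σ, hσ, hσrep⟩ := supp_supporting hμ
  apply Set.sInter_subset_of_mem
  refine ⟨(((supp_closed μ).isCompact).image g.continuous).isClosed, ?_⟩
  set A : Set Y := g '' IPMsupp μ
  set r : C(IPMsupp μ, A) :=
    ⟨fun x => ⟨g x, ⟨x.1, x.2, rfl⟩⟩, by
      apply Continuous.subtype_mk
      exact g.continuous.comp continuous_subtype_val⟩ with hr
  refine ⟨fun h => σ (h.comp r), ⟨fun c => ?_, fun φ c => ?_, fun φ ψ => ?_⟩, fun φ => ?_⟩
  · have : (ContinuousMap.const A c).comp r = ContinuousMap.const (IPMsupp μ) c := by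
      ext x; rfl
    simp [this, hσ.1]
  · have : (φ + ContinuousMap.const A c).comp r
        = φ.comp r + ContinuousMap.const (IPMsupp μ) c := by ext x; rfl
    simp [this, hσ.2.1]
  · have : (φ ⊔ ψ).comp r = φ.comp r ⊔ ψ.comp r := by ext x; rfl
    simp [this, hσ.2.2]
  · show μ (φ.comp g) = σ ((φ.restrict A).comp r)
    have : (φ.restrict A).comp r = (φ.comp g).restrict (IPMsupp μ) := by ext x; rfl
    rw [this, ← hσrep]

lemma adm_map {X Y : Type*} [TopologicalSpace X] [TopologicalSpace Y]
    (f : C(X, Y)) {μ ν : C(X, ℝ) → ℝ} {lam : C(X × X, ℝ) → ℝ}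
    (h : lam ∈ AdmSet μ ν) :
    IPMmap (f.prodMap f) lam ∈ AdmSet (IPMmap f μ) (IPMmap f ν) := by
  refine ⟨isIPM_map _ h.1, ?_, ?_⟩
  · funext φ
    show lam ((φ.comp ContinuousMap.fst).comp (f.prodMap f)) = μ (φ.comp f)
    have : (φ.comp ContinuousMap.fst).comp (f.prodMap f)
        = (φ.comp f).comp ContinuousMap.fst := by ext p; rfl
    rw [this]
    exact congrFun h.2.1 (φ.comp f)
  · funext φ
    show lam ((φ.comp ContinuousMap.snd).comp (f.prodMap f)) = ν (φ.comp f)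
    have : (φ.comp ContinuousMap.snd).comp (f.prodMap f)
        = (φ.comp f).comp ContinuousMap.snd := by ext p; rfl
    rw [this]
    exact congrFun h.2.2 (φ.comp f)

lemma lip {X : Type*} [MetricSpace X] [CompactSpace X] {ν : C(X, ℝ) → ℝ}
    (hν : IsIPM X ν) : Continuous ν := by
  have key : ∀ g h : C(X, ℝ), ν g ≤ ν h + dist g h := by
    intro g h
    have : ∀ x, g x ≤ (h + ContinuousMap.const X (dist g h)) x := by
      intro x
      have := ContinuousMap.dist_apply_le_dist (f := g) (g := h) x
      have h2 : g x - h x ≤ dist (g x) (h x) := by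
        rw [Real.dist_eq]; exact le_abs_self _
      simp only [ContinuousMap.add_apply, ContinuousMap.const_apply]
      linarith
    calc ν g ≤ ν (h + ContinuousMap.const X (dist g h)) := mono hν this
    _ = ν h + dist g h := hν.2.1 _ _
  have hlip : LipschitzWith 1 ν := by
    apply LipschitzWith.of_dist_le_mul
    intro g h
    rw [NNReal.coe_one, one_mul, Real.dist_eq, abs_sub_le_iff]
    constructor
    · linarith [key g h]
    · linarith [key h g, dist_comm g h]
  exact hlip.continuous

lemma adm_nonempty {X : Type*} [MetricSpace X] [CompactSpace X] {μ ν : C(X, ℝ) → ℝ}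
    (hμ : IsIPM X μ) (hν : IsIPM X ν) : (AdmSet μ ν).Nonempty := by
  set ξ : C(X × X, ℝ) → ℝ :=
    fun φ => μ ⟨fun x => ν (φ.curry x), (lip hν).comp φ.curry.continuous⟩ with hξ
  refine ⟨ξ, ⟨⟨fun c => ?_, fun φ c => ?_, fun φ ψ => ?_⟩, ?_, ?_⟩⟩
  · have : (⟨fun x => ν ((ContinuousMap.const (X × X) c).curry x), (lip hν).comp (ContinuousMap.const (X × X) c).curry.continuous⟩ : C(X, ℝ))
        = ContinuousMap.const X c := by
      ext x
      have : (ContinuousMap.const (X × X) c).curry x = ContinuousMap.const X c := by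
        ext y; rfl
      simp only [ContinuousMap.coe_mk, this, hν.1, ContinuousMap.const_apply]
    show μ _ = c
    rw [this, hμ.1]
  · have : (⟨fun x => ν ((φ + ContinuousMap.const (X × X) c).curry x), (lip hν).comp (φ + ContinuousMap.const (X × X) c).curry.continuous⟩ : C(X, ℝ))
        = ⟨fun x => ν (φ.curry x), (lip hν).comp φ.curry.continuous⟩
          + ContinuousMap.const X c := by
      ext x
      have h1 : (φ + ContinuousMap.const (X × X) c).curry x
          = φ.curry x + ContinuousMap.const X c := by ext y; rfl
      simp only [ContinuousMap.coe_mk, h1, hν.2.1, ContinuousMap.add_apply, ContinuousMap.const_apply]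
    show μ _ = μ _ + c
    rw [this, hμ.2.1]
  · have : (⟨fun x => ν ((φ ⊔ ψ).curry x), (lip hν).comp (φ ⊔ ψ).curry.continuous⟩ : C(X, ℝ))
        = (⟨fun x => ν (φ.curry x), (lip hν).comp φ.curry.continuous⟩ : C(X, ℝ))
          ⊔ ⟨fun x => ν (ψ.curry x), (lip hν).comp ψ.curry.continuous⟩ := by
      ext x
      have h1 : (φ ⊔ ψ).curry x = φ.curry x ⊔ ψ.curry x := by ext y; rfl
      simp [h1, hν.2.2]
    show μ _ = max (μ _) (μ _)
    rw [this, hμ.2.2]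
  · funext φ
    show μ _ = μ φ
    congr 1
    ext x
    have h1 : (φ.comp ContinuousMap.fst).curry x = ContinuousMap.const X (φ x) := by
      ext y; rfl
    simp [h1, hν.1]
  · funext φ
    show μ _ = ν φ
    have h1 : (⟨fun x => ν ((φ.comp ContinuousMap.snd).curry x), (lip hν).comp (φ.comp ContinuousMap.snd).curry.continuous⟩ : C(X, ℝ))
        = ContinuousMap.const X (ν φ) := by
      ext x
      have : (φ.comp ContinuousMap.snd).curry x = φ := by ext y; rfl
      simp [this]
    rw [h1, hμ.1]


lemma rhoID_le {Y : Type*} [MetricSpace Y] {μ₁ μ₂ : C(Y, ℝ) → ℝ}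
    {ξ : C(Y × Y, ℝ) → ℝ} (hξ : ξ ∈ AdmSet μ₁ μ₂) :
    rhoID (fun a b : Y => dist a b) μ₁ μ₂ ≤
      sSup ((fun p : Y × Y => dist p.1 p.2) '' IPMsupp ξ) := by
  apply csInf_le
  · refine ⟨0, fun r hr => ?_⟩
    obtain ⟨η, _, rfl⟩ := hr
    exact Real.sSup_nonneg (by rintro x ⟨p, _, rfl⟩; exact dist_nonneg)
  · exact ⟨ξ, hξ, rfl⟩

lemma part1 {X Y : Type*} [MetricSpace X] [CompactSpace X]
    [MetricSpace Y] [CompactSpace Y] (f : C(X, Y)) {μ ν : C(X, ℝ) → ℝ}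
    {lam : C(X × X, ℝ) → ℝ} (hlam : lam ∈ AdmSet μ ν) :
    rhoID (fun a b : Y => dist a b) (IPMmap f μ) (IPMmap f ν) ≤
      sSup ((fun p : X × X => dist (f p.1) (f p.2)) '' IPMsupp lam) := by
  refine (rhoID_le (adm_map f hlam)).trans ?_
  have hsub := supp_map_subset (f.prodMap f) hlam.1
  apply csSup_le_csSup
  · exact (supp_closed lam).isCompact.bddAbove_image
      (Continuous.continuousOn (by fun_prop))
  · exact (supp_nonempty (isIPM_map (f.prodMap f) hlam.1)).image _
  · rintro r ⟨p, hp, rfl⟩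
    obtain ⟨q, hq, hpq⟩ := hsub hp
    exact ⟨q, hq, by rw [← hpq]; rfl⟩


end IPMAux

/-- For continuous `f : X → Y` and an optimal admissible measure `lam` for `(μ, ν)`,
`ρ_I(I(f)μ, I(f)ν) ≤ sup { ρ_Y(f x, f y) : (x,y) ∈ supp lam }`; consequently, if `f` is
`(ε, δ)`-uniformly continuous then so is `I(f)`. -/
theorem rhoI_map_estimate {X Y : Type*} [MetricSpace X] [CompactSpace X]
    [MetricSpace Y] [CompactSpace Y] (f : C(X, Y)) :
    (∀ (μ ν : C(X, ℝ) → ℝ), IsIPM X μ → IsIPM X ν →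
      ∀ lam ∈ AdmSet μ ν,
        rhoID (fun x y : X => dist x y) μ ν =
          sSup ((fun p : X × X => dist p.1 p.2) '' IPMsupp lam) →
        rhoID (fun a b : Y => dist a b) (IPMmap f μ) (IPMmap f ν) ≤
          sSup ((fun p : X × X => dist (f p.1) (f p.2)) '' IPMsupp lam)) ∧
    (∀ ε δ : ℝ, (∀ x y : X, dist x y < δ → dist (f x) (f y) < ε) →
      ∀ μ ν : C(X, ℝ) → ℝ, IsIPM X μ → IsIPM X ν →
        rhoID (fun x y : X => dist x y) μ ν < δ →
        rhoID (fun a b : Y => dist a b) (IPMmap f μ) (IPMmap f ν) < ε) := by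
  constructor
  · intro μ ν hμ hν lam hlam _
    exact IPMAux.part1 f hlam
  · intro ε δ hf μ ν hμ hν hlt
    have hSne : ((fun ξ => sSup ((fun p : X × X => dist p.1 p.2) '' IPMsupp ξ)) ''
        AdmSet μ ν).Nonempty := (IPMAux.adm_nonempty hμ hν).image _
    obtain ⟨r, ⟨lam, hlam, rfl⟩, hr⟩ := exists_lt_of_csInf_lt hSne hlt
    -- every point of the support is δ-close
    have hsuppne := IPMAux.supp_nonempty hlam.1
    have hsuppcpt := (IPMAux.supp_closed lam).isCompact
    have hbdd : BddAbove ((fun p : X × X => dist p.1 p.2) '' IPMsupp lam) :=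
      hsuppcpt.bddAbove_image (Continuous.continuousOn (by fun_prop))
    have hclose : ∀ p ∈ IPMsupp lam, dist (f p.1) (f p.2) < ε := by
      intro p hp
      apply hf
      calc dist p.1 p.2 ≤ _ := le_csSup hbdd ⟨p, hp, rfl⟩
      _ < δ := hr
    -- the sup over the compact support is attained
    obtain ⟨p₀, hp₀, hmax⟩ := hsuppcpt.exists_isMaxOn hsuppne
      (Continuous.continuousOn (f := fun p : X × X => dist (f p.1) (f p.2)) (by fun_prop))
    have hsup_le : sSup ((fun p : X × X => dist (f p.1) (f p.2)) '' IPMsupp lam)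
        ≤ dist (f p₀.1) (f p₀.2) := by
      apply Real.sSup_le
      · rintro x ⟨q, hq, rfl⟩; exact hmax hq
      · exact dist_nonneg
    calc rhoID (fun a b : Y => dist a b) (IPMmap f μ) (IPMmap f ν)
        ≤ sSup ((fun p : X × X => dist (f p.1) (f p.2)) '' IPMsupp lam) :=
          IPMAux.part1 f hlam
      _ ≤ dist (f p₀.1) (f p₀.2) := hsup_le
      _ < ε := hclose p₀ hp₀
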